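/- For any ρ > 0 and t > 0, ∫_{2ρ}^∞ exp(-u²/(4t²))/√(cosh u - cosh ρ) du ≤ (√(2π)·t / (√3·ρ)) · exp(-ρ²/t²). -/

import Mathlib

open Real MeasureTheory

lemma cosh_sub_bound (ρ u : ℝ) (hρ : 0 < ρ) (hu : 2 * ρ ≤ u) :
    3 / 2 * ρ ^ 2 ≤ Real.cosh u - Real.cosh ρ := by
  have h1 : Real.cosh (2 * ρ) ≤ Real.cosh u := by
    apply Real.cosh_le_cosh.2
    rw [abs_of_nonneg (by positivity), abs_of_nonneg (by linarith)]
    exact hu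
  have hs : ρ / 2 ≤ Real.sinh (ρ / 2) := Real.self_le_sinh_iff.2 (by positivity)
  have hcs : Real.cosh (ρ / 2) ^ 2 = Real.sinh (ρ / 2) ^ 2 + 1 := Real.cosh_sq (ρ / 2)
  have h2 : 1 + ρ ^ 2 / 2 ≤ Real.cosh ρ := by
    have hq : Real.cosh ρ = Real.cosh (ρ / 2) ^ 2 + Real.sinh (ρ / 2) ^ 2 := by
      rw [show ρ = 2 * (ρ / 2) by ring, Real.cosh_two_mul]
      ring_nf
    nlinarith
  have h3 : Real.cosh (2 * ρ) = 2 * Real.cosh ρ ^ 2 - 1 := by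
    rw [Real.cosh_two_mul ρ]
    nlinarith [Real.cosh_sq ρ]
  nlinarith [Real.one_le_cosh ρ]

theorem kernel_integral_far_bound (ρ t : ℝ) (hρ : 0 < ρ) (ht : 0 < t) :
    (∫ u in Set.Ioi (2 * ρ),
        Real.exp (-u ^ 2 / (4 * t ^ 2)) / Real.sqrt (Real.cosh u - Real.cosh ρ)) ≤
      Real.sqrt (2 * π) * t / (Real.sqrt 3 * ρ) * Real.exp (-ρ ^ 2 / t ^ 2) := by
  have h2pos : (0:ℝ) < Real.sqrt 2 := by positivity
  have h3pos : (0:ℝ) < Real.sqrt 3 := by positivity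
  set C : ℝ := Real.sqrt 2 / (Real.sqrt 3 * ρ) * Real.exp (-ρ ^ 2 / t ^ 2) with hC
  have hCpos : 0 < C := by positivity
  set b : ℝ := 1 / (4 * t ^ 2) with hb
  have hbpos : 0 < b := by positivity
  set g : ℝ → ℝ := fun u => C * Real.exp (-b * (u - 2 * ρ) ^ 2) with hg
  have hgi : IntegrableOn g (Set.Ioi (2 * ρ)) := by
    apply Integrable.integrableOn
    apply Integrable.const_mul
    have : Integrable (fun v : ℝ => Real.exp (-b * v ^ 2)) := integrable_exp_neg_mul_sq hbpos
    simpa using this.comp_sub_right (2 * ρ)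
  have hA : (0:ℝ) < Real.sqrt 3 / Real.sqrt 2 * ρ := by positivity
  have hsq' : Real.sqrt 3 / Real.sqrt 2 * ρ = Real.sqrt (3 / 2 * ρ ^ 2) := by
    rw [show (3:ℝ) / 2 * ρ ^ 2 = (Real.sqrt 3 / Real.sqrt 2 * ρ) ^ 2 by
      rw [mul_pow, div_pow, Real.sq_sqrt (by norm_num : (0:ℝ) ≤ 3),
        Real.sq_sqrt (by norm_num : (0:ℝ) ≤ 2)]]
    rw [Real.sqrt_sq hA.le]
  have hmono : (∫ u in Set.Ioi (2 * ρ),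
        Real.exp (-u ^ 2 / (4 * t ^ 2)) / Real.sqrt (Real.cosh u - Real.cosh ρ)) ≤
      ∫ u in Set.Ioi (2 * ρ), g u := by
    apply integral_mono_of_nonneg
    · filter_upwards with u
      positivity
    · exact hgi
    · rw [Filter.EventuallyLE, MeasureTheory.ae_restrict_iff' measurableSet_Ioi]
      filter_upwards with u hu
      have hu' : 2 * ρ ≤ u := le_of_lt hu
      have hcosh := cosh_sub_bound ρ u hρ hu'
      have hsq : Real.sqrt 3 / Real.sqrt 2 * ρ ≤ Real.sqrt (Real.cosh u - Real.cosh ρ) := by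
        rw [hsq']
        exact Real.sqrt_le_sqrt hcosh
      have hexp : Real.exp (-u ^ 2 / (4 * t ^ 2)) ≤
          Real.exp (-ρ ^ 2 / t ^ 2) * Real.exp (-b * (u - 2 * ρ) ^ 2) := by
        rw [← Real.exp_add]
        apply Real.exp_le_exp.2
        have h4 : 0 ≤ 4 * ρ * (u - 2 * ρ) := by nlinarith
        have hle : (u - 2 * ρ) ^ 2 + 4 * ρ ^ 2 ≤ u ^ 2 := by nlinarith
        calc -u ^ 2 / (4 * t ^ 2) ≤ -((u - 2 * ρ) ^ 2 + 4 * ρ ^ 2) / (4 * t ^ 2) := by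
              exact (div_le_div_iff_of_pos_right (show (0:ℝ) < 4 * t ^ 2 by positivity)).2 (by linarith)
          _ = -ρ ^ 2 / t ^ 2 + -b * (u - 2 * ρ) ^ 2 := by
              rw [hb]; field_simp; ring
      calc Real.exp (-u ^ 2 / (4 * t ^ 2)) / Real.sqrt (Real.cosh u - Real.cosh ρ)
          ≤ (Real.exp (-ρ ^ 2 / t ^ 2) * Real.exp (-b * (u - 2 * ρ) ^ 2)) /
              (Real.sqrt 3 / Real.sqrt 2 * ρ) := by
            apply div_le_div₀ (by positivity) hexp hA hsq
        _ = g u := by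
            rw [hg, hC]
            field_simp
  refine hmono.trans ?_
  have htrans : (∫ u in Set.Ioi (2 * ρ), g u) =
      C * ∫ v in Set.Ioi (0:ℝ), Real.exp (-b * v ^ 2) := by
    rw [hg, MeasureTheory.integral_const_mul]
    congr 1
    have : (∫ u in Set.Ioi (2 * ρ), Real.exp (-b * (u - 2 * ρ) ^ 2)) =
        ∫ u, Set.indicator (Set.Ioi (0:ℝ)) (fun v => Real.exp (-b * v ^ 2)) (u - 2 * ρ) := by
      rw [← MeasureTheory.integral_indicator measurableSet_Ioi]
      congr 1
      ext u
      by_cases h : u ∈ Set.Ioi (2 * ρ)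
      · rw [Set.indicator_of_mem h, Set.indicator_of_mem (by simp at h ⊢; linarith)]
      · rw [Set.indicator_of_notMem h, Set.indicator_of_notMem (by simp at h ⊢; linarith)]
    rw [this]
    simp_rw [sub_eq_add_neg]
    rw [MeasureTheory.integral_add_right_eq_self
      (fun u => Set.indicator (Set.Ioi (0:ℝ)) (fun v => Real.exp (-b * v ^ 2)) u) (-(2 * ρ))]
    rw [MeasureTheory.integral_indicator measurableSet_Ioi]
  rw [htrans, integral_gaussian_Ioi]
  have hval : Real.sqrt (π / b) / 2 = Real.sqrt π * t := by
    rw [hb, show π / (1 / (4 * t ^ 2)) = π * (2 * t) ^ 2 by rw [div_div_eq_mul_div, div_one]; ring,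
      Real.sqrt_mul Real.pi_pos.le, Real.sqrt_sq (by linarith)]
    ring
  rw [hval, hC, show Real.sqrt (2 * π) = Real.sqrt 2 * Real.sqrt π from
    Real.sqrt_mul (by norm_num) π]
  exact le_of_eq (by ring)
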